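/- arXiv:1905.13289 — 2 statements merged into one kernel-verified Lean document; each statement's English description precedes it below -/
import Mathlib

section
/- If A and B are symmetric positive semidefinite d×d real matrices with B ⪯ A, and λ > 0, then all eigenvalues of (A + λI)^{-1/2} B (A + λI)^{-1/2} lie in the interval [0, σ/(σ+λ)], where σ is the largest eigenvalue of A. -/
open Matrix

section

open scoped ComplexOrder

/-- The positive semidefinite square root of a positive semidefinite matrix
(the definition `Matrix.PosSemidef.sqrt` of the older Mathlib, since removed). -/
noncomputable def Matrix.PosSemidef.sqrt {n 𝕜 : Type*} [Fintype n] [DecidableEq n] [RCLike 𝕜]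
    {A : Matrix n n 𝕜} (hA : A.PosSemidef) : Matrix n n 𝕜 :=
  hA.1.eigenvectorUnitary.1 * diagonal ((↑) ∘ (√·) ∘ hA.1.eigenvalues) *
  (star hA.1.eigenvectorUnitary : Matrix n n 𝕜)

end

lemma Matrix.PosSemidef.posSemidef_sqrt {n : Type*} [Fintype n] [DecidableEq n]
    {A : Matrix n n ℝ} (hA : A.PosSemidef) : hA.sqrt.PosSemidef := by
  unfold Matrix.PosSemidef.sqrt
  rw [Matrix.star_eq_conjTranspose]
  exact (posSemidef_diagonal_iff.mpr fun i => by simp [Real.sqrt_nonneg]).mul_mul_conjTranspose_same _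

lemma Matrix.PosSemidef.sqrt_mul_self {n : Type*} [Fintype n] [DecidableEq n]
    {A : Matrix n n ℝ} (hA : A.PosSemidef) : hA.sqrt * hA.sqrt = A := by
  unfold Matrix.PosSemidef.sqrt
  have hU : (star hA.1.eigenvectorUnitary : Matrix n n ℝ) * hA.1.eigenvectorUnitary.1 = 1 :=
    Unitary.coe_star_mul_self _
  conv_rhs => rw [hA.1.spectral_theorem]
  rw [Unitary.conjStarAlgAut_apply]
  simp only [Matrix.mul_assoc]
  rw [← Matrix.mul_assoc (star _ : Matrix n n ℝ), hU, Matrix.one_mul,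
    ← Matrix.mul_assoc (diagonal _) (diagonal _), diagonal_mul_diagonal]
  congr 1
  congr 1
  congr 1
  funext i
  simp [Real.mul_self_sqrt (hA.eigenvalues_nonneg i)]

lemma psd_smul {n : Type*} [Fintype n] {A : Matrix n n ℝ} (hA : A.PosSemidef)
    {c : ℝ} (hc : 0 ≤ c) : (c • A).PosSemidef := by
  refine ⟨?_, fun x => ?_⟩
  · unfold Matrix.IsHermitian
    rw [conjTranspose_smul, hA.1]
    simp
  · exact (hA.smul hc).2 x

lemma smul_one_sub_psd {n : Type*} [Fintype n] [DecidableEq n] {A : Matrix n n ℝ}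
    (hA : A.IsHermitian) {σ : ℝ} (h : ∀ i, hA.eigenvalues i ≤ σ) :
    (σ • (1 : Matrix n n ℝ) - A).PosSemidef := by
  set U : Matrix n n ℝ := (hA.eigenvectorUnitary : Matrix n n ℝ) with hU
  have hUU : U * star U = 1 := (Matrix.mem_unitaryGroup_iff).mp hA.eigenvectorUnitary.2
  have key : σ • (1 : Matrix n n ℝ) - A
      = U * (diagonal (fun i => σ - hA.eigenvalues i)) * star U := by
    have hd : diagonal (fun i => σ - hA.eigenvalues i)
        = σ • (1 : Matrix n n ℝ) - diagonal (RCLike.ofReal ∘ hA.eigenvalues) := by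
      rw [smul_one_eq_diagonal, diagonal_sub]
      rfl
    rw [hd, mul_sub, sub_mul]
    congr 1
    · rw [Matrix.mul_smul, mul_one, Matrix.smul_mul, hUU]
    · exact hA.spectral_theorem
  rw [key, Matrix.star_eq_conjTranspose]
  exact (posSemidef_diagonal_iff.mpr (fun i => sub_nonneg.mpr (h i))).mul_mul_conjTranspose_same U

/-- If `A, B` are symmetric PSD `d×d` real matrices with `B ⪯ A` and `λ > 0`, then all
eigenvalues of `(A + λI)⁻¹ᐟ² B (A + λI)⁻¹ᐟ²` lie in `[0, σ/(σ+λ)]`, where `σ` is the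
largest eigenvalue of `A`. -/
theorem stmt0 (d : ℕ) (A B : Matrix (Fin d) (Fin d) ℝ) (l σ : ℝ)
    (hA : A.IsSymm) (hB : B.PosSemidef) (hAB : (A - B).PosSemidef)
    (hl : 0 < l)
    (hP : (A + l • (1 : Matrix (Fin d) (Fin d) ℝ)).PosSemidef)
    (hσ_mem : σ ∈ spectrum ℝ A) (hσ_max : ∀ μ ∈ spectrum ℝ A, μ ≤ σ) :
    ∀ μ ∈ spectrum ℝ (hP.sqrt⁻¹ * B * hP.sqrt⁻¹), μ ∈ Set.Icc (0 : ℝ) (σ / (σ + l)) := by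
  intro μ hμ
  have hAH : A.IsHermitian := by
    ext i j
    rw [conjTranspose_apply, star_trivial]
    exact hA.apply i j
  -- A is PSD
  have hApsd : A.PosSemidef := by simpa using hAB.add hB
  -- P is PosDef
  have hlone : (l • (1 : Matrix (Fin d) (Fin d) ℝ)).PosDef := by
    rw [smul_one_eq_diagonal]
    exact .diagonal fun _ => hl
  have hPD : (A + l • (1 : Matrix (Fin d) (Fin d) ℝ)).PosDef :=
    Matrix.PosDef.posSemidef_add hApsd hlone
  -- S = sqrt is invertible, symmetric
  set S : Matrix (Fin d) (Fin d) ℝ := hP.sqrt with hSdef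
  have hS : S.PosSemidef := hP.posSemidef_sqrt
  have hSS : S * S = A + l • 1 := hP.sqrt_mul_self
  have hdetS : IsUnit S.det := by
    have : S.det * S.det = (A + l • 1).det := by rw [← det_mul, hSS]
    have h2 : S.det ≠ 0 := by
      intro h0
      rw [h0, mul_zero] at this
      exact hPD.det_pos.ne this
    exact h2.isUnit
  have hSi : S⁻¹ * S = 1 := nonsing_inv_mul S hdetS
  have hSi' : S * S⁻¹ = 1 := mul_nonsing_inv S hdetS
  have hSiH : (S⁻¹).IsHermitian := by
    rw [Matrix.IsHermitian, conjTranspose_nonsing_inv, hS.1]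
  -- M is PSD
  have hM : ((S⁻¹) * B * (S⁻¹)).PosSemidef := by
    have := hB.conjTranspose_mul_mul_same (S⁻¹)
    rwa [hSiH.eq] at this
  -- σ ≥ 0 and eigenvalue bounds
  have hσ0 : 0 ≤ σ := by
    rw [hAH.spectrum_real_eq_range_eigenvalues] at hσ_mem
    obtain ⟨i, hi⟩ := hσ_mem
    exact hi ▸ hApsd.eigenvalues_nonneg i
  have hσl : 0 < σ + l := by linarith
  set c : ℝ := σ / (σ + l) with hc
  -- σ•1 - A PSD
  have hσA : (σ • (1 : Matrix (Fin d) (Fin d) ℝ) - A).PosSemidef :=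
    smul_one_sub_psd hAH fun i => hσ_max _ (hAH.eigenvalues_mem_spectrum_real i)
  -- c•P - B PSD
  have hkey : (c • (A + l • (1 : Matrix (Fin d) (Fin d) ℝ)) - B).PosSemidef := by
    have heq : c • (A + l • (1 : Matrix (Fin d) (Fin d) ℝ)) - B
        = (l / (σ + l)) • (σ • (1 : Matrix (Fin d) (Fin d) ℝ) - A) + (A - B) := by
      rw [hc]
      match_scalars
      · field_simp
        ring
      · field_simp
      · norm_num
    rw [heq]
    exact (psd_smul hσA (by positivity)).add hAB
  -- conjugate: c•1 - M PSD
  have hN : (c • (1 : Matrix (Fin d) (Fin d) ℝ) - S⁻¹ * B * S⁻¹).PosSemidef := by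
    have h1 : S⁻¹ * (c • (A + l • (1 : Matrix (Fin d) (Fin d) ℝ)) - B) * S⁻¹
        = c • (1 : Matrix (Fin d) (Fin d) ℝ) - S⁻¹ * B * S⁻¹ := by
      rw [Matrix.mul_sub, Matrix.sub_mul, Matrix.mul_smul, Matrix.smul_mul, ← hSS]
      congr 2
      rw [← mul_assoc, mul_assoc (S⁻¹ * S), hSi, hSi', one_mul]
    have := hkey.conjTranspose_mul_mul_same (S⁻¹)
    rwa [hSiH.eq, h1] at this
  -- conclude
  constructor
  · rw [hM.1.spectrum_real_eq_range_eigenvalues] at hμ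
    obtain ⟨i, hi⟩ := hμ
    exact hi ▸ hM.eigenvalues_nonneg i
  · have hmem : c - μ ∈ spectrum ℝ (c • (1 : Matrix (Fin d) (Fin d) ℝ) - S⁻¹ * B * S⁻¹) := by
      have halg : (algebraMap ℝ (Matrix (Fin d) (Fin d) ℝ)) c
          = c • (1 : Matrix (Fin d) (Fin d) ℝ) := Algebra.algebraMap_eq_smul_one c
      rw [← halg, ← spectrum.singleton_sub_eq]
      exact Set.sub_mem_sub rfl hμ
    rw [hN.1.spectrum_real_eq_range_eigenvalues] at hmem
    obtain ⟨i, hi⟩ := hmem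
    have := hi ▸ hN.eigenvalues_nonneg i
    linarith
end

section
/- Let H be symmetric positive semidefinite with largest eigenvalue σ_max, λ > 0, H_λ = H + λI, and suppose H_w = α x xᵀ with α ≥ 0, x ∈ ℝ^d, and H_w ⪯ H. Then α xᵀ H_λ^{-1} x ≤ σ_max/(σ_max + λ), and consequently 1/(1 − α xᵀ H_λ^{-1} x) ≤ 1 + σ_max/λ. -/
open Matrix Pointwise

/-- If `H ⪰ 0` has largest eigenvalue `σ_max`, `λ > 0`, `H_λ = H + λI`, and
`H_w = α x xᵀ ⪯ H` with `α ≥ 0`, then `α xᵀ H_λ⁻¹ x ≤ σ_max/(σ_max + λ)` and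
`1/(1 − α xᵀ H_λ⁻¹ x) ≤ 1 + σ_max/λ`. -/
theorem stmt11 (d : ℕ) (H : Matrix (Fin d) (Fin d) ℝ) (x : Fin d → ℝ) (α l σmax : ℝ)
    (hH : H.PosSemidef) (hl : 0 < l) (hα : 0 ≤ α)
    (hσ_mem : σmax ∈ spectrum ℝ H) (hσ_max : ∀ μ ∈ spectrum ℝ H, μ ≤ σmax)
    (hle : (H - α • vecMulVec x x).PosSemidef) :
    α * (x ⬝ᵥ ((H + l • (1 : Matrix (Fin d) (Fin d) ℝ))⁻¹ *ᵥ x)) ≤ σmax / (σmax + l) ∧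
    1 / (1 - α * (x ⬝ᵥ ((H + l • (1 : Matrix (Fin d) (Fin d) ℝ))⁻¹ *ᵥ x)))
      ≤ 1 + σmax / l := by
  have hσ0 : 0 ≤ σmax := by
    rw [hH.1.spectrum_real_eq_range_eigenvalues] at hσ_mem
    obtain ⟨i, hi⟩ := hσ_mem
    exact hi ▸ hH.eigenvalues_nonneg i
  have hσl : 0 < σmax + l := by linarith
  set Hl : Matrix (Fin d) (Fin d) ℝ := H + l • 1 with hHl_def
  have hlI : (l • (1 : Matrix (Fin d) (Fin d) ℝ)).PosDef := by
    rw [smul_one_eq_diagonal]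
    exact posDef_diagonal_iff.2 fun i => hl
  have hHl : Hl.PosDef := Matrix.PosDef.posSemidef_add hH hlI
  set y : Fin d → ℝ := Hl⁻¹ *ᵥ x with hy_def
  have hxy : Hl *ᵥ y = x := by
    rw [hy_def, mulVec_mulVec, mul_nonsing_inv _ (isUnit_iff_ne_zero.2 hHl.det_pos.ne'),
      one_mulVec]
  set A : ℝ := x ⬝ᵥ y with hA_def
  set B : ℝ := y ⬝ᵥ y with hB_def
  set C : ℝ := y ⬝ᵥ (H *ᵥ y) with hC_def
  have hB0 : 0 ≤ B := Finset.sum_nonneg fun i _ => mul_self_nonneg (y i)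
  have hA0 : 0 ≤ A := hHl.inv.posSemidef.dotProduct_mulVec_nonneg x
  -- A = C + l * B
  have h3 : A = C + l * B := by
    rw [hA_def, ← hxy, hHl_def, add_mulVec, smul_mulVec, one_mulVec, dotProduct_comm,
      dotProduct_add, dotProduct_smul]
    simp [hC_def, hB_def, smul_eq_mul]
  -- α A² ≤ C
  have h1 : α * A ^ 2 ≤ C := by
    have h := hle.dotProduct_mulVec_nonneg y
    rw [star_trivial, sub_mulVec, dotProduct_sub, smul_mulVec, dotProduct_smul] at h
    have hvv : (vecMulVec x x) *ᵥ y = (x ⬝ᵥ y) • x := by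
      ext i
      simp [vecMulVec_apply, mulVec, dotProduct, Finset.mul_sum, Finset.sum_mul, mul_comm,
        mul_assoc, mul_left_comm]
    rw [hvv, dotProduct_smul, smul_eq_mul, smul_eq_mul, dotProduct_comm y x] at h
    nlinarith [h]
  -- C ≤ σmax * B
  have h2 : C ≤ σmax * B := by
    have hM : (σmax • (1 : Matrix (Fin d) (Fin d) ℝ) - H).PosSemidef := by
      have hherm : (σmax • (1 : Matrix (Fin d) (Fin d) ℝ) - H).IsHermitian := by
        show (σmax • (1 : Matrix (Fin d) (Fin d) ℝ) - H)ᴴ = _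
        simp [conjTranspose_sub, conjTranspose_smul, hH.1.eq]
        exact hH.1
      apply hherm.posSemidef_iff_eigenvalues_nonneg.2
      intro i
      have hmem := hherm.eigenvalues_mem_spectrum_real i
      have hspec : spectrum ℝ (σmax • (1 : Matrix (Fin d) (Fin d) ℝ) - H)
          = ({σmax} : Set ℝ) - spectrum ℝ H := by
        rw [← Algebra.algebraMap_eq_smul_one, ← spectrum.singleton_sub_eq]
      rw [hspec] at hmem
      obtain ⟨a, ha, b, hb, hab⟩ := Set.mem_sub.1 hmem
      rw [Set.mem_singleton_iff] at ha
      subst ha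
      have := hσ_max b hb
      rw [← hab]
      exact sub_nonneg.2 this
    have h := hM.dotProduct_mulVec_nonneg y
    rw [star_trivial, sub_mulVec, dotProduct_sub, smul_mulVec, one_mulVec,
      dotProduct_smul, smul_eq_mul] at h
    rw [hC_def, hB_def]; linarith
  -- main scalar inequality
  have key : α * A * (σmax + l) ≤ σmax := by
    rcases eq_or_lt_of_le hA0 with hA | hA
    · rw [← hA]; simpa using hσ0
    · nlinarith [mul_le_mul_of_nonneg_right h1 hσl.le, mul_le_mul_of_nonneg_left h3.le hl.le,
        mul_pos hA hσl]
  have goal1 : α * A ≤ σmax / (σmax + l) := (le_div_iff₀ hσl).2 key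
  refine ⟨goal1, ?_⟩
  have hlt1 : σmax / (σmax + l) < 1 := (div_lt_one hσl).2 (by linarith)
  have h1c : 0 < 1 - α * A := by linarith
  rw [div_le_iff₀ h1c]
  have hexp : (1 + σmax / l) * (1 - α * A) = ((l + σmax) * (1 - α * A)) / l := by
    field_simp
  rw [hexp, le_div_iff₀ hl]
  nlinarith [key]
end
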